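/- arXiv:1809.07599 — 5 statements merged into one kernel-verified Lean document; each statement's English description precedes it below -/
import Mathlib

section
/- Let $d, n \ge 1$, let each $f_i\colon \mathbb{R}^d \to \mathbb{R}$ ($i \in \{1,\dots,n\}$) be $L$-smooth, and let $f = \frac{1}{n}\sum_{i=1}^n f_i$ be $\mu$-strongly convex ($\mu>0$) with minimizer $x^\star$ and minimum value $f^\star$. Let $x, \tilde{x} \in \mathbb{R}^d$, set $m = \tilde{x} - x$, let $\eta > 0$, and suppose $\frac{1}{n}\sum_{i=1}^n \|\nabla f_i(x)\|^2 \le G^2$. Then $\frac{1}{n}\sum_{i=1}^n \big\|\tilde{x} - \eta \nabla f_i(x) - x^\star\big\|^2 \le \left(1 - \frac{\eta\mu}{2}\right)\|\tilde{x} - x^\star\|^2 + \eta^2 G^2 - \eta\,(f(x) - f^\star) + \eta(\mu + 2L)\|m\|^2$. -/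
open Finset

set_option maxHeartbeats 2000000 in
/-- Lemma 1 (one-step perturbed-iterate inequality), stated deterministically with the
expectation over a uniform index written as an average. Each `f i` is `L`-smooth, the
average `F` is `μ`-strongly convex with minimizer `xstar`, `m = x̃ - x`, and the averaged
stochastic gradients at `x` have squared norm at most `G²`. -/
theorem perturbed_iterate_step (d n : ℕ) (hd : 1 ≤ d) (hn : 1 ≤ n)
    (L μ G : ℝ) (hμ : 0 < μ)
    (f : Fin n → EuclideanSpace ℝ (Fin d) → ℝ)
    (hsmooth : ∀ (i : Fin n) (u v : EuclideanSpace ℝ (Fin d)),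
      f i v ≤ f i u + (inner ℝ (gradient (f i) u) (v - u) : ℝ) + L / 2 * ‖v - u‖ ^ 2)
    (F : EuclideanSpace ℝ (Fin d) → ℝ)
    (hF : F = fun z => (1 / (n : ℝ)) * ∑ i : Fin n, f i z)
    (hstrong : ∀ u v : EuclideanSpace ℝ (Fin d),
      F u + (inner ℝ (gradient F u) (v - u) : ℝ) + μ / 2 * ‖v - u‖ ^ 2 ≤ F v)
    (xstar : EuclideanSpace ℝ (Fin d)) (hmin : ∀ y, F xstar ≤ F y)
    (x xt m : EuclideanSpace ℝ (Fin d)) (hm : m = xt - x)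
    (η : ℝ) (hη : 0 < η)
    (hG : (1 / (n : ℝ)) * ∑ i : Fin n, ‖gradient (f i) x‖ ^ 2 ≤ G ^ 2) :
    (1 / (n : ℝ)) * ∑ i : Fin n, ‖xt - η • gradient (f i) x - xstar‖ ^ 2 ≤
      (1 - η * μ / 2) * ‖xt - xstar‖ ^ 2 + η ^ 2 * G ^ 2 - η * (F x - F xstar)
        + η * (μ + 2 * L) * ‖m‖ ^ 2 := by
  have hn0 : (0:ℝ) < n := by exact_mod_cast hn
  -- averaged smoothness of F with the averaged gradient
  have hFs : ∀ u v : EuclideanSpace ℝ (Fin d),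
      F v ≤ F u + (inner ℝ ((1/(n:ℝ)) • ∑ i : Fin n, gradient (f i) u) (v - u) : ℝ)
        + L / 2 * ‖v - u‖ ^ 2 := by
    intro u v
    have hsum : ∑ i : Fin n, f i v
        ≤ ∑ i : Fin n, (f i u + (inner ℝ (gradient (f i) u) (v - u) : ℝ) + L / 2 * ‖v - u‖ ^ 2) :=
      Finset.sum_le_sum fun i _ => hsmooth i u v
    have hin : (inner ℝ ((1/(n:ℝ)) • ∑ i : Fin n, gradient (f i) u) (v - u) : ℝ)
        = (1/(n:ℝ)) * ∑ i : Fin n, (inner ℝ (gradient (f i) u) (v - u) : ℝ) := by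
      rw [real_inner_smul_left, sum_inner]
    rw [hF, hin]
    simp only [Finset.sum_add_distrib, Finset.sum_const, card_univ, Fintype.card_fin,
      nsmul_eq_mul] at hsum
    have h2 := mul_le_mul_of_nonneg_left hsum (by positivity : (0:ℝ) ≤ 1/(n:ℝ))
    have h3 : (1/(n:ℝ)) * ((n:ℝ) * (L/2 * ‖v - u‖^2)) = L/2 * ‖v - u‖^2 := by
      field_simp
    calc (1/(n:ℝ)) * (∑ i : Fin n, f i v)
        ≤ (1/(n:ℝ)) * (∑ i : Fin n, f i u
            + ∑ i : Fin n, (inner ℝ (gradient (f i) u) (v - u) : ℝ)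
            + (n:ℝ) * (L/2 * ‖v - u‖^2)) := h2
      _ = (1/(n:ℝ)) * ∑ i : Fin n, f i u
            + (1/(n:ℝ)) * ∑ i : Fin n, (inner ℝ (gradient (f i) u) (v - u) : ℝ)
            + L/2 * ‖v - u‖^2 := by rw [mul_add, mul_add, h3]
  -- name the averaged gradient at x
  obtain ⟨gb, hgb⟩ : ∃ gb : EuclideanSpace ℝ (Fin d),
      gb = (1/(n:ℝ)) • ∑ i : Fin n, gradient (f i) x := ⟨_, rfl⟩
  -- gradient F x equals the averaged gradient
  have hgrad : gradient F x = gb := by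
    have key : ∀ t : ℝ, 0 < t →
        t * (inner ℝ (gradient F x - gb) (gradient F x - gb) : ℝ)
          ≤ t^2 * ((L - μ)/2 * ‖gradient F x - gb‖^2) := by
      intro t ht
      set w := gradient F x - gb with hw
      have h1 := hstrong x (x + t • w)
      have h2 := hFs x (x + t • w)
      rw [← hgb] at h2
      rw [add_sub_cancel_left] at h1 h2
      rw [real_inner_smul_right] at h1 h2
      have hnorm : ‖t • w‖^2 = t^2 * ‖w‖^2 := by
        rw [norm_smul, mul_pow, Real.norm_eq_abs, sq_abs]
      rw [hnorm] at h1 h2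
      rw [inner_sub_left]
      nlinarith [h1, h2]
    by_contra hne
    have hpos : 0 < (inner ℝ (gradient F x - gb) (gradient F x - gb) : ℝ) := by
      rw [real_inner_self_eq_norm_sq]
      have h0 : gradient F x - gb ≠ 0 := sub_ne_zero.mpr hne
      exact pow_pos (norm_pos_iff.mpr h0) 2
    set a := (inner ℝ (gradient F x - gb) (gradient F x - gb) : ℝ)
    have ha : a = ‖gradient F x - gb‖^2 := real_inner_self_eq_norm_sq _
    set c := (L - μ)/2 * ‖gradient F x - gb‖^2 with hc
    rcases le_or_gt c 0 with hcle | hcpos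
    · have := key 1 one_pos; nlinarith
    · have key2 : ∀ t : ℝ, 0 < t → a ≤ t * c := by
        intro t ht
        have h := key t ht
        rw [sq] at h
        nlinarith [h, ht]
      have ht : 0 < a / (2*c) := div_pos hpos (by linarith)
      have := key2 (a/(2*c)) ht
      have heq : (a/(2*c)) * c = a/2 := by
        field_simp
      rw [heq] at this
      linarith
  -- μ ≤ L, hence L > 0
  have hμL : μ ≤ L := by
    set w : EuclideanSpace ℝ (Fin d) := EuclideanSpace.single (⟨0, hd⟩ : Fin d) (1:ℝ) with hwdef
    have hwn : ‖w‖ = 1 := by rw [hwdef, EuclideanSpace.norm_single]; norm_num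
    have h1 := hstrong x (x + w)
    have h2 := hFs x (x + w)
    rw [← hgb, ← hgrad] at h2
    rw [add_sub_cancel_left] at h1 h2
    rw [hwn] at h1 h2
    nlinarith [h1, h2]
  have hL : 0 < L := lt_of_lt_of_le hμ hμL
  -- PL-type inequality: ‖gb‖² ≤ 2 L (F x - F xstar)
  have hPL : ‖gb‖^2 ≤ 2 * L * (F x - F xstar) := by
    have h1 := hFs x (x - (1/L) • gb)
    rw [← hgb] at h1
    have hxy : x - (1/L) • gb - x = -((1/L) • gb) := sub_sub_cancel_left _ _
    rw [hxy] at h1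
    rw [inner_neg_right, real_inner_smul_right, real_inner_self_eq_norm_sq] at h1
    have hnorm : ‖-((1/L) • gb)‖^2 = (1/L)^2 * ‖gb‖^2 := by
      rw [norm_neg, norm_smul, mul_pow, Real.norm_eq_abs, sq_abs]
    rw [hnorm] at h1
    have h2 := hmin (x - (1/L) • gb)
    have hLne : L ≠ 0 := ne_of_gt hL
    have hsimp : L/2 * ((1/L)^2 * ‖gb‖^2) = ‖gb‖^2 / (2*L) := by field_simp
    rw [hsimp] at h1
    have h5 : F xstar ≤ F x - 1/L * ‖gb‖^2 + ‖gb‖^2/(2*L) := le_trans h2 h1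
    have hkey : 1/L * ‖gb‖^2 - ‖gb‖^2/(2*L) = ‖gb‖^2/(2*L) := by
      field_simp; ring
    have h4 : ‖gb‖^2/(2*L) ≤ F x - F xstar := by linarith
    have h6 := (div_le_iff₀ (by positivity : (0:ℝ) < 2*L)).mp h4
    linarith
  -- strong convexity at x toward xstar
  have hsc : F x - F xstar + μ/2 * ‖x - xstar‖^2 ≤ (inner ℝ gb (x - xstar) : ℝ) := by
    have h1 := hstrong x xstar
    rw [hgrad] at h1
    have h2 : (inner ℝ gb (xstar - x) : ℝ) = -(inner ℝ gb (x - xstar) : ℝ) := by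
      rw [← inner_neg_right, neg_sub]
    have h3 : ‖xstar - x‖ = ‖x - xstar‖ := norm_sub_rev _ _
    rw [h2, h3] at h1
    linarith
  -- Young: -2⟨gb, m⟩ ≤ ‖gb‖²/(2L) + 2L‖m‖² ≤ (F x - F xstar) + 2L‖m‖²
  have hY : -2 * (inner ℝ gb m : ℝ) ≤ (F x - F xstar) + 2*L*‖m‖^2 := by
    have hcs : |(inner ℝ gb m : ℝ)| ≤ ‖gb‖ * ‖m‖ := abs_real_inner_le_norm _ _
    have h1 : -2 * (inner ℝ gb m : ℝ) ≤ 2 * (‖gb‖ * ‖m‖) := by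
      have := neg_abs_le (inner ℝ gb m : ℝ); linarith
    have h2 : 2 * (‖gb‖ * ‖m‖) ≤ ‖gb‖^2/(2*L) + 2*L*‖m‖^2 := by
      have hkey : 2 * (‖gb‖ * ‖m‖) - 2*L*‖m‖^2 ≤ ‖gb‖^2/(2*L) := by
        rw [le_div_iff₀ (by positivity : (0:ℝ) < 2*L)]
        nlinarith [sq_nonneg (‖gb‖ - 2*L*‖m‖)]
      linarith
    have h3 : ‖gb‖^2/(2*L) ≤ F x - F xstar := by
      rw [div_le_iff₀ (by positivity : (0:ℝ) < 2*L)]; nlinarith [hPL]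
    linarith
  -- norm splitting: ‖xt - xstar‖² ≤ 2‖x - xstar‖² + 2‖m‖²
  have hxts : xt - xstar = (x - xstar) + m := by
    rw [hm, add_comm]; exact (sub_add_sub_cancel _ _ _).symm
  have hns : ‖xt - xstar‖^2 ≤ 2*‖x - xstar‖^2 + 2*‖m‖^2 := by
    rw [hxts, norm_add_sq_real]
    have hcs : |(inner ℝ (x - xstar) m : ℝ)| ≤ ‖x - xstar‖ * ‖m‖ := abs_real_inner_le_norm _ _
    nlinarith [sq_nonneg (‖x - xstar‖ - ‖m‖), le_abs_self (inner ℝ (x - xstar) m : ℝ)]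
  -- expansion of each squared norm
  have hexp : ∀ i : Fin n, ‖xt - η • gradient (f i) x - xstar‖^2
      = ‖xt - xstar‖^2 - 2*η*(inner ℝ (xt - xstar) (gradient (f i) x) : ℝ)
        + η^2 * ‖gradient (f i) x‖^2 := by
    intro i
    have h1 : xt - η • gradient (f i) x - xstar = (xt - xstar) - η • gradient (f i) x :=
      sub_right_comm _ _ _
    rw [h1, norm_sub_sq_real, real_inner_smul_right]
    have hnorm : ‖η • gradient (f i) x‖^2 = η^2 * ‖gradient (f i) x‖^2 := by
      rw [norm_smul, mul_pow, Real.norm_eq_abs, sq_abs]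
    rw [hnorm]; ring
  -- sum over i
  have hsum : ∑ i : Fin n, ‖xt - η • gradient (f i) x - xstar‖^2
      = (n:ℝ) * ‖xt - xstar‖^2
        - 2*η*(inner ℝ (xt - xstar) (∑ i : Fin n, gradient (f i) x) : ℝ)
        + η^2 * ∑ i : Fin n, ‖gradient (f i) x‖^2 := by
    rw [inner_sum]
    simp_rw [hexp]
    rw [Finset.sum_add_distrib, Finset.sum_sub_distrib, Finset.sum_const, card_univ,
      Fintype.card_fin, nsmul_eq_mul, ← Finset.mul_sum, ← Finset.mul_sum]
  -- rewrite big inner product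
  have hip : (inner ℝ (xt - xstar) (∑ i : Fin n, gradient (f i) x) : ℝ)
      = (n:ℝ) * ((inner ℝ gb (x - xstar) : ℝ) + (inner ℝ gb m : ℝ)) := by
    have h1 : (inner ℝ gb (xt - xstar) : ℝ) = (inner ℝ gb (x - xstar) : ℝ) + (inner ℝ gb m : ℝ) := by
      rw [hxts, inner_add_right]
    have h2 : (inner ℝ gb (xt - xstar) : ℝ)
        = (1/(n:ℝ)) * (inner ℝ (∑ i : Fin n, gradient (f i) x) (xt - xstar) : ℝ) := by
      rw [hgb, real_inner_smul_left]
    have h3 : (inner ℝ (xt - xstar) (∑ i : Fin n, gradient (f i) x) : ℝ)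
        = (inner ℝ (∑ i : Fin n, gradient (f i) x) (xt - xstar) : ℝ) := real_inner_comm _ _
    rw [h3]
    rw [h2] at h1
    field_simp at h1 ⊢
    linarith [h1]
  -- final combination
  set A := ‖xt - xstar‖^2
  set B := ‖x - xstar‖^2
  set M := ‖m‖^2
  set D := F x - F xstar
  set P := (inner ℝ gb (x - xstar) : ℝ)
  set R := (inner ℝ gb m : ℝ)
  set Q := ∑ i : Fin n, ‖gradient (f i) x‖^2
  have hQ : (1/(n:ℝ)) * Q ≤ G^2 := hG
  have hlhs : (1/(n:ℝ)) * ∑ i : Fin n, ‖xt - η • gradient (f i) x - xstar‖^2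
      = A - 2*η*(P + R) + η^2 * ((1/(n:ℝ)) * Q) := by
    rw [hsum, hip]
    field_simp
  rw [hlhs]
  have e1 : -(2*η)*P ≤ -(2*η)*(D + μ/2 * B) := by
    have := mul_le_mul_of_nonneg_left hsc (le_of_lt (by positivity : (0:ℝ) < 2*η))
    nlinarith [this]
  have e2 : η * (-2*R) ≤ η * (D + 2*L*M) :=
    mul_le_mul_of_nonneg_left hY (le_of_lt hη)
  have e3 : (η*μ/2) * A ≤ (η*μ/2) * (2*B + 2*M) :=
    mul_le_mul_of_nonneg_left hns (by positivity)
  have e4 : η^2 * ((1/(n:ℝ)) * Q) ≤ η^2 * G^2 :=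
    mul_le_mul_of_nonneg_left hQ (by positivity)
  clear_value A B M D P R Q
  clear hexp hsum hlhs hsc hY hns hip hPL hG hQ hstrong hsmooth hFs hF hmin hm hgb hgrad
  linarith [e1, e2, e3, e4]
end

section
/- Let $d \ge 1$, $0 < k \le d$, and let $\mathrm{comp}\colon \mathbb{R}^d \to \mathbb{R}^d$ be a deterministic $k$-contraction, i.e. $\|x - \mathrm{comp}(x)\|^2 \le (1-k/d)\|x\|^2$ for all $x$. Let $\mu > 0$, $\alpha > 4$, $\rho = \frac{4\alpha}{(\alpha-4)(\alpha+1)^2}$, and let $a$ satisfy $a \ge \frac{(\alpha+1)\frac{d}{k} + \rho + 1}{\rho+1}$ and $a > 1$. Let $\eta_t = \frac{8}{\mu(a+t)}$, let $\gamma_0, \gamma_1, \dots$ be vectors in $\mathbb{R}^d$ with $\|\gamma_t\| \le G$ for all $t$, and define $m_0 = 0$ and $m_{t+1} = m_t + \eta_t \gamma_t - \mathrm{comp}(m_t + \eta_t \gamma_t)$. Then for every $t \ge 0$, $\|m_t\|^2 \le \eta_t^2\,\frac{4\alpha}{\alpha-4}\,\frac{d^2}{k^2}\,G^2$. -/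
lemma le_of_sq_le_sq' (x y : ℝ) (hx : 0 ≤ x) (hy : 0 ≤ y) (h : x^2 ≤ y^2) : x ≤ y := by
  nlinarith

lemma geo_step (S c r b : ℝ) (hc : c ≤ S - r*(S+1)) (hb : S+1 ≤ b*c)
    (hr0 : 0 ≤ r) (hr1 : r ≤ 1) (hS : 0 ≤ S+1) (hb0 : 0 < b) :
    r*(S+1)*(b+1) ≤ S*b := by
  nlinarith [mul_le_mul_of_nonneg_left hc (le_of_lt hb0),
    mul_le_mul_of_nonneg_right hr1 hS]

lemma sum_shift (x : ℝ) (f : ℕ → ℝ) (t : ℕ) :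
    ∑ j ∈ Finset.range (t+1), x^(t+1-j) * f j
      = x * ((∑ j ∈ Finset.range t, x^(t-j) * f j) + f t) := by
  rw [Finset.sum_range_succ]
  have hcong : ∀ j ∈ Finset.range t, x^(t+1-j) * f j = x * (x^(t-j) * f j) := by
    intro j hj
    have hj' : j < t := Finset.mem_range.mp hj
    have h1 : t+1-j = (t-j)+1 := by omega
    rw [h1, pow_succ]
    ring
  rw [Finset.sum_congr rfl hcong, ← Finset.mul_sum]
  have h2 : t + 1 - t = 1 := by omega
  rw [h2, pow_one]
  ring

lemma L1poly (q e : ℝ) (h1 : 1 ≤ q) (h2 : q ≤ 2) (he0 : 0 ≤ e) (he1 : e ≤ 1) :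
    (2*q + e*(1 - (q-1+e/2))) * ((q^2-1) * ((5*q^2-1)^2 + 4*q^2*(q^2-1)^2))
      ≤ (q-1+e/2) * (5*q^2-1)^3 := by
  nlinarith [pow_le_pow_of_le_one (by linarith : (0:ℝ) ≤ q-1) (by linarith : q-1 ≤ 1) (show 4 ≤ 6 by norm_num),
    pow_le_pow_of_le_one (by linarith : (0:ℝ) ≤ q-1) (by linarith : q-1 ≤ 1) (show 4 ≤ 7 by norm_num),
    pow_le_pow_of_le_one (by linarith : (0:ℝ) ≤ q-1) (by linarith : q-1 ≤ 1) (show 4 ≤ 8 by norm_num),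
    pow_le_pow_of_le_one (by linarith : (0:ℝ) ≤ q-1) (by linarith : q-1 ≤ 1) (show 4 ≤ 9 by norm_num),
    mul_nonneg he0 (by linarith : (0:ℝ) ≤ q-1),
    mul_nonneg (mul_nonneg he0 he0) (by linarith : (0:ℝ) ≤ q-1),
    pow_nonneg (by linarith : (0:ℝ) ≤ q-1) 4,
    sq_nonneg e, sq_nonneg (q-1), mul_nonneg he0 he0]

lemma L2a (q : ℝ) (h1 : 1 ≤ q) :
    25 * ((q^2-1) * ((5*q^2-1)^2 + 4*q^2*(q^2-1)^2)) ≤ (q^2+5) * (5*q^2-1)^3 := by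
  nlinarith [pow_nonneg (by linarith : (0:ℝ) ≤ q-1) 2, pow_nonneg (by linarith : (0:ℝ) ≤ q-1) 4,
    pow_nonneg (by linarith : (0:ℝ) ≤ q-1) 6, pow_nonneg (by linarith : (0:ℝ) ≤ q-1) 8, sq_nonneg q]

lemma L2b (q e : ℝ) (h2 : 2 ≤ q) (he0 : 0 ≤ e) (he1 : e ≤ 1) :
    (1-e) * ((q^2+5)/25) * (2*q + e + e*(q-1+e/2))^2 ≤ 4*(q-e)^2*(q-1+e/2)^2 := by
  nlinarith [mul_nonneg (by linarith : (0:ℝ) ≤ q-2) he0,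
    mul_nonneg (mul_nonneg (by linarith : (0:ℝ) ≤ q-2) he0) he0,
    mul_nonneg (by linarith : (0:ℝ) ≤ q-2) (by linarith : (0:ℝ) ≤ q-2),
    sq_nonneg e, mul_nonneg he0 he0,
    pow_nonneg (by linarith : (0:ℝ) ≤ q-2) 3,
    mul_nonneg (pow_nonneg (by linarith : (0:ℝ) ≤ q-2) 2) he0,
    mul_nonneg (pow_nonneg (by linarith : (0:ℝ) ≤ q-2) 3) he0,
    mul_nonneg (mul_nonneg he0 he0) he0,
    mul_nonneg (mul_nonneg (mul_nonneg he0 he0) he0) he0,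
    mul_nonneg he0 (by linarith : (0:ℝ) ≤ 1-e),
    mul_nonneg (mul_nonneg he0 he0) (by linarith : (0:ℝ) ≤ 1-e)]

set_option maxHeartbeats 1000000 in
/-- The purely real-analytic core. -/
lemma real_core (δ α ρ a : ℝ) (hδ0 : 0 < δ) (hδ1 : δ ≤ 1) (hα : 4 < α)
    (hρ : ρ = 4 * α / ((α - 4) * (α + 1) ^ 2))
    (haA : (α+1) * (1/δ) + (ρ+1) ≤ a*(ρ+1)) (ha1 : 1 < a) :
    ∀ t : ℕ, (∑ j ∈ Finset.range t, (Real.sqrt (1-δ))^(t-j) * (1/(a+(j:ℝ))))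
      ≤ (2*Real.sqrt (α/(α-4))/δ) / (a+(t:ℝ)) := by
  have hα4 : (0:ℝ) < α - 4 := by linarith only [hα]
  set r : ℝ := Real.sqrt (1 - δ) with hrdef
  have hr0 : 0 ≤ r := Real.sqrt_nonneg _
  have hr2 : r ^ 2 = 1 - δ := Real.sq_sqrt (by linarith only [hδ1])
  have hr1 : r ≤ 1 - δ/2 := by
    rw [hrdef, show (1 - δ/2) = Real.sqrt ((1-δ/2)^2) from (Real.sqrt_sq (by linarith only [hδ1])).symm]
    exact Real.sqrt_le_sqrt (by nlinarith only [sq_nonneg δ])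
  have hrle1 : r ≤ 1 := by linarith only [hr1, hδ0]
  set q : ℝ := Real.sqrt (α / (α - 4)) with hqdef
  have hq2 : q ^ 2 = α / (α - 4) :=
    Real.sq_sqrt (div_nonneg (by linarith only [hα]) (by linarith only [hα4]))
  have hq00 : 0 ≤ q := by rw [hqdef]; exact Real.sqrt_nonneg _
  have hq1 : 1 < q := by
    have h1 : (1:ℝ) < α / (α-4) := (one_lt_div hα4).mpr (by linarith only [])
    nlinarith only [hq2, hq00, h1]
  have hq0 : 0 < q := by linarith only [hq1]
  have hq2' : q^2 * (α - 4) = α := by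
    rw [hq2]; field_simp
  have hMα : (q^2-1) * (α-4) = 4 := by linear_combination hq2'
  have hMN : (α+1) * (q^2-1) = 5*q^2-1 := by linear_combination hq2'
  have hM0 : (0:ℝ) < q^2-1 := by
    have := mul_pos (by linarith only [hq1] : (0:ℝ) < q-1) (by linarith only [hq1] : (0:ℝ) < q+1)
    nlinarith only [this]
  have hN0 : (0:ℝ) < 5*q^2-1 := by linarith only [hM0]
  have hρpos : 0 < ρ := by
    rw [hρ]
    exact div_pos (by linarith only [hα]) (mul_pos hα4 (pow_pos (by linarith only [hα]) 2))
  have hρ1 : 0 < ρ + 1 := by linarith only [hρpos]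
  have hρN : (ρ+1) * (5*q^2-1)^2 = (5*q^2-1)^2 + 4*q^2*(q^2-1)^2 := by
    have hρα : ρ * ((α-4) * (α+1)^2) = 4*α := by
      rw [hρ]
      have hne : (α-4) * (α+1)^2 ≠ 0 :=
        mul_ne_zero (ne_of_gt hα4) (pow_ne_zero 2 (by intro hz; linarith only [hα, hz.ge, hz.le]))
      exact div_mul_cancel₀ _ hne
    have hNα : (5*q^2-1) * (α-4) = 4*(α+1) := by
      calc (5*q^2-1) * (α-4) = (α+1)*(q^2-1)*(α-4) := by rw [hMN]
        _ = (α+1)*((q^2-1)*(α-4)) := by ring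
        _ = (α+1)*4 := by rw [hMα]
        _ = 4*(α+1) := by ring
    have key : ρ * (5*q^2-1)^2 = 4*q^2*(q^2-1)^2 := by
      have h5 : ρ*(5*q^2-1)^2*(α-4)^3 = 4*q^2*(q^2-1)^2*(α-4)^3 := by
        calc ρ*(5*q^2-1)^2*(α-4)^3
            = ρ*(α-4)*((5*q^2-1)*(α-4))^2 := by ring
          _ = ρ*(α-4)*(4*(α+1))^2 := by rw [hNα]
          _ = 16*(ρ*((α-4)*(α+1)^2)) := by ring
          _ = 16*(4*α) := by rw [hρα]
          _ = 4*(4^2)*α := by ring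
          _ = 4*(((q^2-1)*(α-4))^2)*(q^2*(α-4)) := by rw [hMα, hq2']
          _ = 4*q^2*(q^2-1)^2*(α-4)^3 := by ring
      have h7 : (α-4)^3 ≠ 0 := pow_ne_zero 3 (ne_of_gt hα4)
      exact mul_right_cancel₀ h7 h5
    linear_combination key
  have haA' : (α+1) + δ*(ρ+1) ≤ a*(ρ+1)*δ := by
    have h1 := mul_le_mul_of_nonneg_right haA (le_of_lt hδ0)
    calc (α+1) + δ*(ρ+1) = ((α+1)*(1/δ) + (ρ+1))*δ := by
          field_simp
        _ ≤ a*(ρ+1)*δ := h1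
  set S : ℝ := 2*q/δ with hSdef
  have hS0 : 0 < S := by rw [hSdef]; exact div_pos (by linarith only [hq0]) hδ0
  have hSδ : S*δ = 2*q := by rw [hSdef]; exact div_mul_cancel₀ _ (ne_of_gt hδ0)
  set c : ℝ := q - 1 + δ/2 with hcdef
  have hc0 : 0 < c := by rw [hcdef]; linarith only [hq1, hδ0]
  have ham : 0 < a - 1 := by linarith only [ha1]
  set e : ℝ := Real.sqrt ((1-δ)/δ * (1/(a-1))) with hedef
  have he0 : 0 ≤ e := Real.sqrt_nonneg _
  have he2 : e^2 = (1-δ)/δ * (1/(a-1)) :=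
    Real.sq_sqrt (mul_nonneg (div_nonneg (by linarith only [hδ1]) (by linarith only [hδ0]))
      (le_of_lt (one_div_pos.mpr ham)))
  set h : ℕ → ℝ := fun t => ∑ j ∈ Finset.range t, r^(t-j) * (1/(a+(j:ℝ))) with hhdef
  have hat : ∀ t : ℕ, (0:ℝ) < a + t := by
    intro t
    have : (0:ℝ) ≤ t := Nat.cast_nonneg t
    linarith only [ha1, this]
  have hrec : ∀ t : ℕ, h (t+1) = r * (h t + 1/(a+(t:ℝ))) := by
    intro t
    simp only [hhdef]
    exact sum_shift r (fun j => 1/(a+(j:ℝ))) t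
  have hh0 : h 0 = 0 := by simp [hhdef]
  have hhnn : ∀ t, 0 ≤ h t := by
    intro t
    simp only [hhdef]
    apply Finset.sum_nonneg
    intro j hj
    exact mul_nonneg (pow_nonneg hr0 _) (le_of_lt (one_div_pos.mpr (hat j)))
  -- Cauchy–Schwarz bound: h t ≤ e for all t
  have hte : ∀ t, h t ≤ e := by
    intro t
    apply le_of_sq_le_sq' _ _ (hhnn t) he0
    have cs := Finset.sum_mul_sq_le_sq_mul_sq (Finset.range t)
      (fun j => r^(t-j)) (fun j => 1/(a+(j:ℝ)))
    have b1 : (∑ j ∈ Finset.range t, ((r:ℝ)^(t-j))^2) ≤ (1-δ)/δ := by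
      have hgeo : ∀ s : ℕ, (∑ j ∈ Finset.range s, ((r:ℝ)^2)^(s-j) * (1:ℝ)) ≤ (1-δ)/δ := by
        intro s
        induction s with
        | zero =>
          simp only [Finset.range_zero, Finset.sum_empty]
          exact div_nonneg (by linarith only [hδ1]) (by linarith only [hδ0])
        | succ s ih =>
          rw [sum_shift (r^2) (fun _ => (1:ℝ)) s]
          have hx0 : (0:ℝ) ≤ r^2 := sq_nonneg r
          calc r^2 * ((∑ j ∈ Finset.range s, ((r:ℝ)^2)^(s-j) * (1:ℝ)) + 1)
              ≤ r^2 * ((1-δ)/δ + 1) := by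
                apply mul_le_mul_of_nonneg_left _ hx0
                linarith only [ih]
            _ = (1-δ) * ((1-δ)/δ + 1) := by rw [hr2]
            _ = (1-δ)/δ := by
                field_simp
                ring
      calc (∑ j ∈ Finset.range t, ((r:ℝ)^(t-j))^2)
          = ∑ j ∈ Finset.range t, ((r:ℝ)^2)^(t-j) * 1 := by
            apply Finset.sum_congr rfl
            intro j hj
            rw [mul_one, ← pow_mul, ← pow_mul, Nat.mul_comm]
        _ ≤ (1-δ)/δ := hgeo t
    have b2 : (∑ j ∈ Finset.range t, ((1:ℝ)/(a+(j:ℝ)))^2) ≤ 1/(a-1) := by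
      have htel : ∀ s:ℕ, (∑ j ∈ Finset.range s, ((1:ℝ)/(a+(j:ℝ)))^2)
          ≤ 1/(a-1) - 1/(a-1+(s:ℝ)) := by
        intro s
        induction s with
        | zero => simp
        | succ s ih =>
          rw [Finset.sum_range_succ]
          have p1 : (0:ℝ) < a-1+s := by
            have : (0:ℝ) ≤ s := Nat.cast_nonneg s
            linarith only [ha1, this]
          have p2 : (0:ℝ) < a+s := by
            have : (0:ℝ) ≤ s := Nat.cast_nonneg s
            linarith only [ha1, this]
          push_cast
          have hre : a-1+((s:ℝ)+1) = a+(s:ℝ) := by ring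
          rw [hre]
          have hle : ((1:ℝ)/(a+(s:ℝ)))^2 ≤ 1/(a-1+(s:ℝ)) - 1/(a+(s:ℝ)) := by
            rw [div_pow, one_pow, div_sub_div _ _ (ne_of_gt p1) (ne_of_gt p2)]
            rw [div_le_div_iff₀ (pow_pos p2 2) (mul_pos p1 p2)]
            nlinarith only [p1, p2]
          linarith only [ih, hle]
      have hlast : (0:ℝ) < 1/(a-1+(t:ℝ)) := by
        apply one_div_pos.mpr
        have : (0:ℝ) ≤ t := Nat.cast_nonneg t
        linarith only [ham, this]
      linarith only [htel t, hlast]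
    have hb2nn : (0:ℝ) ≤ ∑ j ∈ Finset.range t, ((1:ℝ)/(a+(j:ℝ)))^2 :=
      Finset.sum_nonneg (fun j hj => sq_nonneg _)
    calc (h t)^2 = (∑ j ∈ Finset.range t, (r:ℝ)^(t-j) * (1/(a+(j:ℝ))))^2 := by rw [hhdef]
      _ ≤ (∑ j ∈ Finset.range t, ((r:ℝ)^(t-j))^2) * (∑ j ∈ Finset.range t, ((1:ℝ)/(a+(j:ℝ)))^2) := cs
      _ ≤ ((1-δ)/δ) * (1/(a-1)) :=
          mul_le_mul b1 b2 hb2nn (div_nonneg (by linarith only [hδ1]) (by linarith only [hδ0]))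
      _ = e^2 := he2.symm
  -- main induction
  have main : ∀ t : ℕ, h t ≤ S / (a + (t:ℝ)) := by
    intro t
    induction t with
    | zero =>
      rw [hh0]
      simp only [Nat.cast_zero, add_zero]
      exact div_nonneg (le_of_lt hS0) (by linarith only [ha1])
    | succ t ih =>
      have hb0 : (0:ℝ) < a + t := hat t
      have hb1 : (1:ℝ) < a + t := by
        have : (0:ℝ) ≤ t := Nat.cast_nonneg t
        linarith only [ha1, this]
      have hcast : ((t+1:ℕ):ℝ) = (t:ℝ)+1 := by push_cast; ring
      rw [hrec t, hcast]
      have hgoalb : (0:ℝ) < a + ((t:ℝ)+1) := by linarith only [hb0]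
      have hδc : (0:ℝ) < δ*c := mul_pos hδ0 hc0
      rcases le_or_gt ((2*q+δ)/(δ*c)) (a+(t:ℝ)) with hcase | hcase
      · -- geometric regime
        have h1 : h t + 1/(a+(t:ℝ)) ≤ (S+1)/(a+(t:ℝ)) := by
          have hexp : (S+1)/(a+(t:ℝ)) = S/(a+(t:ℝ)) + 1/(a+(t:ℝ)) := by ring
          linarith only [ih, hexp]
        have hA1 : c ≤ S - r*(S+1) := by
          have hm : r*(S+1) ≤ (1-δ/2)*(S+1) :=
            mul_le_mul_of_nonneg_right hr1 (by linarith only [hS0])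
          have hexp2 : (1-δ/2)*(S+1) = S + 1 - q - δ/2 := by
            linear_combination (-1/2 : ℝ) * hSδ
          rw [hcdef]
          linarith only [hm, hexp2]
        have hA2 : 2*q+δ ≤ (a+(t:ℝ)) * (δ*c) := by
          have := (div_le_iff₀ hδc).mp hcase
          linarith only [this]
        have hA3 : S+1 ≤ (a+(t:ℝ)) * c := by
          have hSd : (S+1)*δ = 2*q+δ := by linear_combination hSδ
          have hre : (a+(t:ℝ))*(δ*c) = ((a+(t:ℝ))*c)*δ := by ring
          rw [hre] at hA2
          have := le_of_mul_le_mul_right (by linarith only [hA2, hSd] : (S+1)*δ ≤ ((a+(t:ℝ))*c)*δ) hδ0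
          exact this
        have h2 := geo_step S c r (a+(t:ℝ)) hA1 hA3 hr0 hrle1 (by linarith only [hS0]) hb0
        calc r * (h t + 1/(a+(t:ℝ))) ≤ r * ((S+1)/(a+(t:ℝ))) :=
              mul_le_mul_of_nonneg_left h1 hr0
          _ = (r*(S+1))/(a+(t:ℝ)) := by ring
          _ ≤ S/(a+((t:ℝ)+1)) := by
              rw [div_le_div_iff₀ hb0 hgoalb]
              linarith only [h2]
      · -- early regime
        rcases le_or_gt q 2 with hqle | hqgt
        · -- impossible: a ≥ bθ
          exfalso
          have hL1 := L1poly q δ (le_of_lt hq1) hqle (le_of_lt hδ0) hδ1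
          rw [← hcdef] at hL1
          have step1 : (2*q + δ*(1-c))*(ρ+1) ≤ (α+1)*c := by
            have hterm : (2*q+δ*(1-c))*(ρ+1)*((5*q^2-1)^2*(q^2-1))
                ≤ (α+1)*c*((5*q^2-1)^2*(q^2-1)) := by
              calc (2*q+δ*(1-c))*(ρ+1)*((5*q^2-1)^2*(q^2-1))
                  = (2*q+δ*(1-c))*((q^2-1)*((ρ+1)*(5*q^2-1)^2)) := by ring
                _ = (2*q+δ*(1-c))*((q^2-1)*((5*q^2-1)^2 + 4*q^2*(q^2-1)^2)) := by rw [hρN]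
                _ ≤ c*(5*q^2-1)^3 := hL1
                _ = c*((α+1)*(q^2-1))*(5*q^2-1)^2 := by rw [hMN]; ring
                _ = (α+1)*c*((5*q^2-1)^2*(q^2-1)) := by ring
            exact le_of_mul_le_mul_right hterm (mul_pos (pow_pos hN0 2) hM0)
          have m1 := mul_le_mul_of_nonneg_right haA' (le_of_lt hc0)
          have m2 : (2*q+δ)*(ρ+1) ≤ (a*(δ*c))*(ρ+1) := by linarith only [m1, step1]
          have hcA : 2*q+δ ≤ a * (δ*c) := le_of_mul_le_mul_right m2 hρ1
          have hba : (2*q+δ)/(δ*c) ≤ a := by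
            rw [div_le_iff₀ hδc]
            linarith only [hcA]
          have hta : a ≤ a + (t:ℝ) := by
            have : (0:ℝ) ≤ t := Nat.cast_nonneg t
            linarith only [this]
          linarith only [hba, hta, hcase]
        · -- q > 2 : use Cauchy–Schwarz bound
          have hα1 : (0:ℝ) < α+1 := by linarith only [hα]
          have hae : (α+1) ≤ δ*(a-1)*(ρ+1) := by linarith only [haA']
          have hP : e^2 ≤ (1-δ)*((q^2+5)/25) := by
            have h1 : e^2 ≤ (1-δ)*((ρ+1)/(α+1)) := by
              rw [he2]
              have had : (0:ℝ) < δ*(a-1) := mul_pos hδ0 ham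
              rw [div_mul_div_comm, mul_one, div_le_iff₀ had]
              calc (1-δ) = (1-δ)*1 := by ring
                _ ≤ (1-δ)*((δ*(a-1)*(ρ+1))/(α+1)) := by
                    apply mul_le_mul_of_nonneg_left _ (by linarith only [hδ1] : (0:ℝ) ≤ 1-δ)
                    rw [le_div_iff₀ hα1]
                    linarith only [hae]
                _ = (1-δ)*((ρ+1)/(α+1))*(δ*(a-1)) := by ring
            have h2 : (ρ+1)/(α+1) ≤ (q^2+5)/25 := by
              rw [div_le_div_iff₀ hα1 (by norm_num : (0:ℝ) < 25)]
              have hL2a := L2a q (le_of_lt hq1)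
              have hh25 : (ρ+1)*25*((q^2-1)*(5*q^2-1)^2)
                  ≤ (q^2+5)*(α+1)*((q^2-1)*(5*q^2-1)^2) := by
                calc (ρ+1)*25*((q^2-1)*(5*q^2-1)^2)
                    = 25*((q^2-1)*((ρ+1)*(5*q^2-1)^2)) := by ring
                  _ = 25*((q^2-1)*((5*q^2-1)^2 + 4*q^2*(q^2-1)^2)) := by rw [hρN]
                  _ ≤ (q^2+5)*(5*q^2-1)^3 := hL2a
                  _ = (q^2+5)*((α+1)*(q^2-1))*(5*q^2-1)^2 := by rw [hMN]; ring
                  _ = (q^2+5)*(α+1)*((q^2-1)*(5*q^2-1)^2) := by ring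
              exact le_of_mul_le_mul_right hh25 (mul_pos hM0 (pow_pos hN0 2))
            calc e^2 ≤ (1-δ)*((ρ+1)/(α+1)) := h1
              _ ≤ (1-δ)*((q^2+5)/25) :=
                  mul_le_mul_of_nonneg_left h2 (by linarith only [hδ1])
          have hqδ : (0:ℝ) < q - δ := by linarith only [hqgt, hδ1]
          have hX0 : (0:ℝ) ≤ 2*q+δ+δ*c := by linarith only [hq0, hδ0, hδc]
          have hkey : e*(2*q+δ+δ*c) ≤ 2*(q-δ)*c := by
            apply le_of_sq_le_sq' _ _ (mul_nonneg he0 hX0)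
              (mul_nonneg (by linarith only [hqδ] : (0:ℝ) ≤ 2*(q-δ)) (le_of_lt hc0))
            have hL2b := L2b q δ (le_of_lt hqgt) (le_of_lt hδ0) hδ1
            rw [← hcdef] at hL2b
            calc (e*(2*q+δ+δ*c))^2 = e^2*(2*q+δ+δ*c)^2 := by ring
              _ ≤ (1-δ)*((q^2+5)/25)*(2*q+δ+δ*c)^2 :=
                  mul_le_mul_of_nonneg_right hP (sq_nonneg _)
              _ ≤ 4*(q-δ)^2*c^2 := hL2b
              _ = (2*(q-δ)*c)^2 := by ring
          -- assemble
          have he1b : e*((a+(t:ℝ))+1) ≤ e*((2*q+δ)/(δ*c)+1) :=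
            mul_le_mul_of_nonneg_left (by linarith only [hcase]) he0
          have he3 : e*((2*q+δ)/(δ*c)+1) = e*(2*q+δ+δ*c)/(δ*c) := by
            field_simp
          have he4 : e*(2*q+δ+δ*c)/(δ*c) ≤ (2*(q-δ)*c)/(δ*c) := by
            rw [div_eq_mul_inv, div_eq_mul_inv]
            exact mul_le_mul_of_nonneg_right hkey (le_of_lt (inv_pos.mpr hδc))
          have he5 : (2*(q-δ)*c)/(δ*c) = S - 2 := by
            rw [hSdef]
            field_simp
          have hb2 : ((a+(t:ℝ))+1)/(a+(t:ℝ)) ≤ 2 := by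
            rw [div_le_iff₀ hb0]
            linarith only [hb1]
          have hchain : (e + 1/(a+(t:ℝ))) * ((a+(t:ℝ))+1) ≤ S := by
            have hexp : (e + 1/(a+(t:ℝ))) * ((a+(t:ℝ))+1)
                = e*((a+(t:ℝ))+1) + ((a+(t:ℝ))+1)/(a+(t:ℝ)) := by
              field_simp
            rw [hexp]
            rw [he3] at he1b
            linarith only [he1b, he4, he5, hb2]
          calc r * (h t + 1/(a+(t:ℝ))) ≤ 1 * (e + 1/(a+(t:ℝ))) := by
                apply mul_le_mul hrle1 (by linarith only [hte t])
                  (add_nonneg (hhnn t) (le_of_lt (one_div_pos.mpr hb0))) (by norm_num)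
            _ = e + 1/(a+(t:ℝ)) := one_mul _
            _ ≤ S/(a+((t:ℝ)+1)) := by
                rw [le_div_iff₀ hgoalb]
                calc (e + 1/(a+(t:ℝ))) * (a+((t:ℝ)+1))
                    = (e + 1/(a+(t:ℝ))) * ((a+(t:ℝ))+1) := by ring
                  _ ≤ S := hchain
  intro t
  exact main t

/-- Lemma 2 (memory bound), deterministic form: for a `k`-contraction `comp`, stepsizes
`η_t = 8/(μ(a+t))` with `a` large enough as stated, and update vectors `γ_t` with
`‖γ_t‖ ≤ G`, the error-accumulation vectors `m_t` satisfy
`‖m_t‖² ≤ η_t² (4α/(α-4)) (d/k)² G²`. -/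
theorem memory_bound (d : ℕ) (hd : 1 ≤ d) (k : ℝ) (hk : 0 < k) (hkd : k ≤ (d : ℝ))
    (comp : EuclideanSpace ℝ (Fin d) → EuclideanSpace ℝ (Fin d))
    (hcomp : ∀ z : EuclideanSpace ℝ (Fin d), ‖z - comp z‖ ^ 2 ≤ (1 - k / d) * ‖z‖ ^ 2)
    (μ α ρ a G : ℝ) (hμ : 0 < μ) (hα : 4 < α)
    (hρ : ρ = 4 * α / ((α - 4) * (α + 1) ^ 2))
    (ha : ((α + 1) * ((d : ℝ) / k) + ρ + 1) / (ρ + 1) ≤ a) (ha1 : 1 < a)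
    (η : ℕ → ℝ) (hη : ∀ t : ℕ, η t = 8 / (μ * (a + t)))
    (γ : ℕ → EuclideanSpace ℝ (Fin d)) (hγ : ∀ t : ℕ, ‖γ t‖ ≤ G)
    (m : ℕ → EuclideanSpace ℝ (Fin d)) (hm0 : m 0 = 0)
    (hmrec : ∀ t : ℕ, m (t + 1) = m t + η t • γ t - comp (m t + η t • γ t)) :
    ∀ t : ℕ, ‖m t‖ ^ 2 ≤ (η t) ^ 2 * (4 * α / (α - 4)) * ((d : ℝ) / k) ^ 2 * G ^ 2 := by
  have hd0 : (0:ℝ) < d := by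
    have h1 : (1:ℝ) ≤ d := by exact_mod_cast hd
    linarith
  have hδ0 : 0 < k/(d:ℝ) := div_pos hk hd0
  have hδ1 : k/(d:ℝ) ≤ 1 := (div_le_one hd0).mpr hkd
  have hG : 0 ≤ G := le_trans (norm_nonneg _) (hγ 0)
  have hα4 : (0:ℝ) < α - 4 := by linarith
  have hρ1 : 0 < ρ + 1 := by
    have hpos : 0 < ρ := by
      rw [hρ]
      exact div_pos (by linarith) (mul_pos hα4 (pow_pos (by linarith) 2))
    linarith
  have haA : (α+1) * (1/(k/(d:ℝ))) + (ρ+1) ≤ a*(ρ+1) := by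
    have h2 := (div_le_iff₀ hρ1).mp ha
    have hdk : (d:ℝ)/k = 1/(k/(d:ℝ)) := by rw [one_div_div]
    rw [hdk] at h2
    linarith
  have hcore := real_core (k/(d:ℝ)) α ρ a hδ0 hδ1 hα hρ haA ha1
  set s : ℝ := Real.sqrt (α/(α-4)) with hsdef
  set r : ℝ := Real.sqrt (1 - k/(d:ℝ)) with hrdef
  have hr0 : 0 ≤ r := Real.sqrt_nonneg _
  have hr2 : r^2 = 1 - k/(d:ℝ) := Real.sq_sqrt (by linarith)
  have hat : ∀ t : ℕ, (0:ℝ) < a + t := by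
    intro t
    have h3 : (0:ℝ) ≤ t := Nat.cast_nonneg t
    linarith
  have h8 : (0:ℝ) ≤ 8*G/μ := div_nonneg (by linarith) (le_of_lt hμ)
  have hbound : ∀ t : ℕ,
      ‖m t‖ ≤ (8*G/μ) * (∑ j ∈ Finset.range t, r^(t-j) * (1/(a+(j:ℝ)))) := by
    intro t
    induction t with
    | zero => simp [hm0]
    | succ t ih =>
      have hstep : ‖m (t+1)‖ ≤ r * ‖m t + η t • γ t‖ := by
        have hz := hcomp (m t + η t • γ t)
        rw [← hmrec t] at hz
        have hn2 : ‖m (t+1)‖^2 ≤ (r * ‖m t + η t • γ t‖)^2 := by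
          rw [mul_pow, hr2]
          exact hz
        calc ‖m (t+1)‖ = Real.sqrt (‖m (t+1)‖^2) := (Real.sqrt_sq (norm_nonneg _)).symm
          _ ≤ Real.sqrt ((r * ‖m t + η t • γ t‖)^2) := Real.sqrt_le_sqrt hn2
          _ = r * ‖m t + η t • γ t‖ := Real.sqrt_sq (mul_nonneg hr0 (norm_nonneg _))
      have hη0 : 0 ≤ η t := by
        rw [hη t]
        exact le_of_lt (div_pos (by norm_num) (mul_pos hμ (hat t)))
      have htri : ‖m t + η t • γ t‖ ≤ ‖m t‖ + η t * G := by
        calc ‖m t + η t • γ t‖ ≤ ‖m t‖ + ‖η t • γ t‖ := norm_add_le _ _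
          _ = ‖m t‖ + |η t| * ‖γ t‖ := by rw [norm_smul, Real.norm_eq_abs]
          _ ≤ ‖m t‖ + η t * G := by
              rw [abs_of_nonneg hη0]
              exact add_le_add_right (mul_le_mul_of_nonneg_left (hγ t) hη0) _
      have hηG : η t * G = (8*G/μ) * (1/(a+(t:ℝ))) := by
        rw [hη t]
        field_simp
      calc ‖m (t+1)‖ ≤ r * ‖m t + η t • γ t‖ := hstep
        _ ≤ r * (‖m t‖ + η t * G) := mul_le_mul_of_nonneg_left htri hr0
        _ ≤ r * ((8*G/μ) * (∑ j ∈ Finset.range t, r^(t-j) * (1/(a+(j:ℝ))))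
              + (8*G/μ)*(1/(a+(t:ℝ)))) := by
            apply mul_le_mul_of_nonneg_left _ hr0
            rw [← hηG]
            exact add_le_add_left ih _
        _ = (8*G/μ) * (r * ((∑ j ∈ Finset.range t, r^(t-j)*(1/(a+(j:ℝ)))) + 1/(a+(t:ℝ)))) := by
            ring
        _ = (8*G/μ) * (∑ j ∈ Finset.range (t+1), r^(t+1-j) * (1/(a+(j:ℝ)))) := by
            rw [sum_shift r (fun j => 1/(a+(j:ℝ))) t]
  intro t
  have h1 : ‖m t‖ ≤ (8*G/μ) * ((2*s/(k/(d:ℝ))) / (a+(t:ℝ))) :=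
    le_trans (hbound t) (mul_le_mul_of_nonneg_left (hcore t) h8)
  have hsq := pow_le_pow_left₀ (norm_nonneg (m t)) h1 2
  have hq2 : s^2 = α/(α-4) := by
    rw [hsdef]
    exact Real.sq_sqrt (div_nonneg (by linarith) (by linarith))
  calc ‖m t‖^2 ≤ ((8*G/μ) * ((2*s/(k/(d:ℝ))) / (a+(t:ℝ))))^2 := hsq
    _ = s^2 * ((8/(μ*(a+(t:ℝ))))^2 * 4 * ((d:ℝ)/k)^2 * G^2) := by
        field_simp
        ring
    _ = (η t)^2 * (4*α/(α-4)) * ((d:ℝ)/k)^2 * G^2 := by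
        rw [hq2, hη t]
        field_simp
end

section
/- Let $\mu > 0$, $a > 1$, $A, B \ge 0$, and $\eta_t = \frac{8}{\mu(a+t)}$ for $t \ge 0$. Let $\{a_t\}_{t\ge 0}$ and $\{e_t\}_{t\ge 0}$ be sequences of nonnegative reals satisfying $a_{t+1} \le \left(1 - \frac{\mu\eta_t}{2}\right)a_t + \eta_t^2 A + \eta_t^3 B - \eta_t e_t$ for all $t \ge 0$. Let $w_t = (a+t)^2$ and $S_T = \sum_{t=0}^{T-1} w_t$. Then for every $T \ge 1$: $\frac{1}{S_T}\sum_{t=0}^{T-1} w_t e_t \le \frac{\mu a^3}{8 S_T} a_0 + \frac{4T(T+2a)}{\mu S_T} A + \frac{64 T}{\mu^2 S_T} B$, where $S_T = \frac{T}{6}\left(2T^2 + 6aT - 3T + 6a^2 - 6a + 1\right) \ge \frac{1}{3}T^3$. -/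
open Finset

private lemma per_step (μ x A B E A0 A1 : ℝ) (hμ : 0 < μ) (hx : 1 < x)
    (hA : 0 ≤ A) (hB : 0 ≤ B) (hA0 : 0 ≤ A0)
    (h : A1 ≤ (1 - μ * (8 / (μ * x)) / 2) * A0 + (8 / (μ * x)) ^ 2 * A
        + (8 / (μ * x)) ^ 3 * B - (8 / (μ * x)) * E) :
    x ^ 2 * E ≤ μ / 8 * (x - 1) ^ 3 * A0 - μ / 8 * x ^ 3 * A1
        + 8 * x / μ * A + 64 / μ ^ 2 * B := by
  have hx0 : 0 < x := lt_trans one_pos hx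
  have hμ0 : μ ≠ 0 := hμ.ne'
  have hx0' : x ≠ 0 := hx0.ne'
  have hm : (0:ℝ) ≤ μ * x ^ 3 / 8 := by positivity
  have h3 := mul_le_mul_of_nonneg_left h hm
  have e1 : μ * x ^ 3 / 8 * ((1 - μ * (8 / (μ * x)) / 2) * A0 + (8 / (μ * x)) ^ 2 * A
      + (8 / (μ * x)) ^ 3 * B - (8 / (μ * x)) * E)
      = (x ^ 3 - 4 * x ^ 2) * (μ / 8) * A0 + 8 * x / μ * A + 64 / μ ^ 2 * B - x ^ 2 * E := by
    field_simp
    ring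
  rw [e1] at h3
  nlinarith [mul_nonneg (mul_nonneg hμ.le hA0) (show (0:ℝ) ≤ x ^ 2 + 3 * x - 1 by nlinarith)]

private lemma sum1 (a : ℝ) (T : ℕ) :
    ∑ t ∈ Finset.range T, (a + (t : ℝ)) = T * a + T * (T - 1) / 2 := by
  induction T with
  | zero => simp
  | succ n ih => rw [Finset.sum_range_succ, ih]; push_cast; ring

private lemma sum2 (a : ℝ) (T : ℕ) :
    ∑ t ∈ Finset.range T, (a + (t : ℝ)) ^ 2
      = (T : ℝ) / 6 * (2 * (T : ℝ) ^ 2 + 6 * a * T - 3 * T + 6 * a ^ 2 - 6 * a + 1) := by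
  induction T with
  | zero => simp
  | succ n ih => rw [Finset.sum_range_succ, ih]; push_cast; ring

/-- Lemma 3 (weighted-averaging lemma): if nonnegative real sequences `a_t`, `e_t` satisfy
`a_{t+1} ≤ (1 - μ η_t / 2) a_t + η_t² A + η_t³ B - η_t e_t` with `η_t = 8/(μ(a+t))`, then the
weighted averages of the `e_t` with weights `w_t = (a+t)²` satisfy the stated bound, where
`S_T = ∑_{t<T} w_t = T/6 (2T² + 6aT - 3T + 6a² - 6a + 1) ≥ T³/3`. -/
theorem weighted_averaging_lemma (μ a A B : ℝ) (hμ : 0 < μ) (ha : 1 < a)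
    (hA : 0 ≤ A) (hB : 0 ≤ B)
    (η : ℕ → ℝ) (hη : ∀ t : ℕ, η t = 8 / (μ * (a + t)))
    (aseq e : ℕ → ℝ) (haseq : ∀ t, 0 ≤ aseq t) (he : ∀ t, 0 ≤ e t)
    (hrec : ∀ t : ℕ, aseq (t + 1) ≤
      (1 - μ * η t / 2) * aseq t + (η t) ^ 2 * A + (η t) ^ 3 * B - η t * e t)
    (w : ℕ → ℝ) (hw : ∀ t : ℕ, w t = (a + t) ^ 2)
    (T : ℕ) (hT : 1 ≤ T) (S : ℝ) (hS : S = ∑ t ∈ Finset.range T, w t) :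
    (1 / S) * ∑ t ∈ Finset.range T, w t * e t ≤
        μ * a ^ 3 / (8 * S) * aseq 0 + 4 * T * (T + 2 * a) / (μ * S) * A
          + 64 * T / (μ ^ 2 * S) * B
      ∧ S = (T : ℝ) / 6 * (2 * (T : ℝ) ^ 2 + 6 * a * T - 3 * T + 6 * a ^ 2 - 6 * a + 1)
      ∧ (1 / 3 : ℝ) * (T : ℝ) ^ 3 ≤ S := by
  have hT1 : (1 : ℝ) ≤ (T : ℝ) := by exact_mod_cast hT
  have hSval : S = (T : ℝ) / 6 * (2 * (T : ℝ) ^ 2 + 6 * a * T - 3 * T + 6 * a ^ 2 - 6 * a + 1) := by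
    rw [hS]
    rw [show (∑ t ∈ Finset.range T, w t) = ∑ t ∈ Finset.range T, (a + (t : ℝ)) ^ 2 from
      Finset.sum_congr rfl fun t _ => hw t]
    exact sum2 a T
  have hScube : (1 / 3 : ℝ) * (T : ℝ) ^ 3 ≤ S := by
    rw [hSval]
    nlinarith [mul_nonneg (mul_nonneg (by linarith : (0:ℝ) ≤ (T:ℝ)) (by linarith : (0:ℝ) ≤ (T:ℝ)))
        (by linarith : (0:ℝ) ≤ 2 * a - 1),
      mul_nonneg (by linarith : (0:ℝ) ≤ (T:ℝ)) (by nlinarith : (0:ℝ) ≤ 6 * a ^ 2 - 6 * a + 1)]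
  have hSpos : 0 < S := lt_of_lt_of_le (by positivity) hScube
  -- main sum bound
  set f : ℕ → ℝ := fun t => μ / 8 * (a + (t : ℝ) - 1) ^ 3 * aseq t with hf
  have hmain : ∑ t ∈ Finset.range T, w t * e t ≤
      μ * a ^ 3 / 8 * aseq 0 + 4 * T * (T + 2 * a) / μ * A + 64 * T / μ ^ 2 * B := by
    have step : ∀ t ∈ Finset.range T, w t * e t ≤
        (f t - f (t + 1)) + (8 * (a + (t : ℝ)) / μ) * A + 64 / μ ^ 2 * B := by
      intro t _
      have hx : 1 < a + (t : ℝ) := by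
        have : (0:ℝ) ≤ (t : ℝ) := Nat.cast_nonneg t
        linarith
      have hr := hrec t
      rw [hη t] at hr
      have key := per_step μ (a + (t : ℝ)) A B (e t) (aseq t) (aseq (t + 1)) hμ hx hA hB
        (haseq t) hr
      rw [hw t, hf]
      simp only
      push_cast
      linarith [key]
    calc ∑ t ∈ Finset.range T, w t * e t
        ≤ ∑ t ∈ Finset.range T, ((f t - f (t + 1)) + (8 * (a + (t : ℝ)) / μ) * A
            + 64 / μ ^ 2 * B) := Finset.sum_le_sum step
      _ = (f 0 - f T) + (∑ t ∈ Finset.range T, (8 * (a + (t : ℝ)) / μ)) * A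
            + (T : ℝ) * (64 / μ ^ 2 * B) := by
          rw [Finset.sum_add_distrib, Finset.sum_add_distrib, Finset.sum_range_sub' f T,
            ← Finset.sum_mul, Finset.sum_const, Finset.card_range, nsmul_eq_mul]
      _ ≤ μ * a ^ 3 / 8 * aseq 0 + 4 * T * (T + 2 * a) / μ * A + 64 * T / μ ^ 2 * B := by
          have hsum : ∑ t ∈ Finset.range T, (8 * (a + (t : ℝ)) / μ)
              = 8 / μ * ((T : ℝ) * a + T * (T - 1) / 2) := by
            rw [show (∑ t ∈ Finset.range T, (8 * (a + (t : ℝ)) / μ))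
                = ∑ t ∈ Finset.range T, (8 / μ) * (a + (t : ℝ)) from
              Finset.sum_congr rfl fun t _ => by ring, ← Finset.mul_sum, sum1]
          rw [hsum]
          have hf0 : f 0 = μ / 8 * (a - 1) ^ 3 * aseq 0 := by simp [hf]
          have hfT : 0 ≤ f T := by
            have h4 : (0:ℝ) ≤ a + (T:ℝ) - 1 := by
              have : (0:ℝ) ≤ (T:ℝ) := Nat.cast_nonneg T
              linarith
            simp only [hf]
            exact mul_nonneg (mul_nonneg (by positivity) (pow_nonneg h4 3)) (haseq T)
          have h1 : f 0 - f T ≤ μ * a ^ 3 / 8 * aseq 0 := by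
            rw [hf0]
            have : μ / 8 * (a - 1) ^ 3 * aseq 0 ≤ μ * a ^ 3 / 8 * aseq 0 := by
              have h2 : (a - 1) ^ 3 ≤ a ^ 3 := by nlinarith
              nlinarith [mul_nonneg (mul_nonneg hμ.le (haseq 0))
                (show (0:ℝ) ≤ a ^ 3 - (a - 1) ^ 3 by nlinarith)]
            linarith
          have h2 : 8 / μ * ((T : ℝ) * a + T * (T - 1) / 2) * A
              ≤ 4 * T * (T + 2 * a) / μ * A := by
            apply mul_le_mul_of_nonneg_right _ hA
            rw [div_mul_eq_mul_div, div_le_div_iff₀ hμ hμ]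
            nlinarith
          have h3 : (T : ℝ) * (64 / μ ^ 2 * B) = 64 * T / μ ^ 2 * B := by ring
          linarith
  refine ⟨?_, hSval, hScube⟩
  have hμ0 : μ ≠ 0 := hμ.ne'
  have hS0 : S ≠ 0 := hSpos.ne'
  calc (1 / S) * ∑ t ∈ Finset.range T, w t * e t
      = (∑ t ∈ Finset.range T, w t * e t) / S := by ring
    _ ≤ (μ * a ^ 3 / 8 * aseq 0 + 4 * T * (T + 2 * a) / μ * A + 64 * T / μ ^ 2 * B) / S :=
        (div_le_div_iff_of_pos_right hSpos).mpr hmain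
    _ = μ * a ^ 3 / (8 * S) * aseq 0 + 4 * T * (T + 2 * a) / (μ * S) * A
          + 64 * T / (μ ^ 2 * S) * B := by field_simp
end

section
/- Let $A \ge 0$ and let $d \ge k \ge 1$ be reals. Let $\alpha > 4$, set $\rho = \frac{4\alpha}{(\alpha-4)(\alpha+1)^2}$, and let $a \ge \frac{(\alpha+1)\frac{d}{k} + \rho + 1}{\rho+1}$ with $a > 1$. Let $\eta_t = \frac{1}{a+t}$, and let $\{h_t\}_{t\ge 0}$ be a sequence of nonnegative reals with $h_0 = 0$ and, for all $t \ge 0$, $h_{t+1} \le \min\Big\{\left(1 - \frac{k}{2d}\right)h_t + \frac{2d}{k}\eta_t^2 A,\; (t+1)\sum_{i=0}^{t}\eta_i^2 A\Big\}$. Then for every $t \ge 0$: $h_t \le \frac{4\alpha}{\alpha-4}\,\eta_t^2\,\frac{d^2}{k^2}\,A$. -/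
open Finset

/-- Algebraic inequality for the geometric-decay branch. -/
lemma helper1 (α m s : ℝ) (hα : 4 < α) (hm : 1 ≤ m) (hs : α * m - 1 ≤ s) :
    (1 - 1 / (2 * m)) * (4 * α / (α - 4) * (1 / s) ^ 2 * m ^ 2) + 2 * m * (1 / s) ^ 2 ≤
      4 * α / (α - 4) * (1 / (s + 1)) ^ 2 * m ^ 2 := by
  have hm0 : (0:ℝ) < m := by linarith
  have h4 : (0:ℝ) < α - 4 := by linarith
  have hs0 : (0:ℝ) < s := by nlinarith
  have hs1 : (0:ℝ) < s + 1 := by linarith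
  have key : (α * m - 2) * (s + 1) ^ 2 ≤ α * m * s ^ 2 := by nlinarith
  have e : (1 - 1 / (2 * m)) * (4 * α / (α - 4) * (1 / s) ^ 2 * m ^ 2) + 2 * m * (1 / s) ^ 2
      = (4 * m * (α * m - 2) / (α - 4)) / s ^ 2 := by
    field_simp
    ring
  have e' : 4 * α / (α - 4) * (1 / (s + 1)) ^ 2 * m ^ 2
      = (4 * α * m ^ 2 / (α - 4)) / (s + 1) ^ 2 := by
    rw [div_pow, one_pow]; ring
  rw [e, e', div_le_div_iff₀ (by positivity) (by positivity),
    div_mul_eq_mul_div, div_mul_eq_mul_div, div_le_div_iff₀ h4 h4]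
  nlinarith [mul_le_mul_of_nonneg_left key (by positivity : (0:ℝ) ≤ 4 * m * (α - 4))]

/-- Algebraic inequality for the crude-bound branch. -/
lemma helper2 (α ρ a m u : ℝ) (hα : 4 < α) (hm : 1 ≤ m) (ha1 : 1 < a)
    (hρ : ρ = 4 * α / ((α - 4) * (α + 1) ^ 2))
    (haρ : (α + 1) * m ≤ (a - 1) * (ρ + 1)) (hu : 1 ≤ u)
    (hreg : a + u ≤ α * m) :
    u ^ 2 * (a + u) ^ 2 ≤ 4 * α / (α - 4) * m ^ 2 * ((a - 1) * (a + u - 1)) := by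
  have h4 : (0:ℝ) < α - 4 := by linarith
  have hρ0 : (0:ℝ) < ρ := by
    rw [hρ]; exact div_pos (by linarith) (mul_pos h4 (by positivity))
  have hC : 4 * α / (α - 4) = ρ * (α + 1) ^ 2 := by
    rw [hρ]; field_simp
  have hm' : (α + 1) * m = α * m + m := by ring
  have hu1 : u ≤ (a - 1) * ρ := by nlinarith
  have h2 : u ^ 2 ≤ (a - 1) * ρ * (a + u - 1) := by
    have hb0 : (0:ℝ) ≤ (a - 1) * ρ := mul_nonneg (by linarith) hρ0.le
    nlinarith [mul_le_mul_of_nonneg_right hu1 (by linarith : (0:ℝ) ≤ u),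
      mul_le_mul_of_nonneg_left (show u ≤ a + u - 1 by linarith) hb0]
  have h3 : (a + u) ^ 2 ≤ (α + 1) ^ 2 * m ^ 2 := by nlinarith
  calc u ^ 2 * (a + u) ^ 2
      ≤ ((a - 1) * ρ * (a + u - 1)) * ((α + 1) ^ 2 * m ^ 2) := by
        apply mul_le_mul h2 h3 (sq_nonneg _)
        exact mul_nonneg (mul_nonneg (by linarith) hρ0.le) (by linarith)
    _ = 4 * α / (α - 4) * m ^ 2 * ((a - 1) * (a + u - 1)) := by rw [hC]; ring

set_option maxHeartbeats 1600000 in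
/-- Lemma A.3: a nonnegative sequence `h_t` with `h_0 = 0` satisfying both a
geometric-decay-plus-noise recursion and a crude cumulative bound is dominated by
`(4α/(α-4)) (d/k)² A η_t²`, where `η_t = 1/(a+t)`. -/
theorem memory_recursion_bound (A d k : ℝ) (hA : 0 ≤ A) (hk : 1 ≤ k) (hkd : k ≤ d)
    (α ρ a : ℝ) (hα : 4 < α) (hρ : ρ = 4 * α / ((α - 4) * (α + 1) ^ 2))
    (ha : ((α + 1) * (d / k) + ρ + 1) / (ρ + 1) ≤ a) (ha1 : 1 < a)
    (η : ℕ → ℝ) (hη : ∀ t : ℕ, η t = 1 / (a + t))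
    (h : ℕ → ℝ) (hnonneg : ∀ t, 0 ≤ h t) (h0 : h 0 = 0)
    (hrec : ∀ t : ℕ, h (t + 1) ≤
      min ((1 - k / (2 * d)) * h t + 2 * d / k * (η t) ^ 2 * A)
        (((t : ℝ) + 1) * ∑ i ∈ Finset.range (t + 1), (η i) ^ 2 * A)) :
    ∀ t : ℕ, h t ≤ 4 * α / (α - 4) * (η t) ^ 2 * (d / k) ^ 2 * A := by
  have hk0 : (0:ℝ) < k := by linarith
  have hd0 : (0:ℝ) < d := by linarith
  have hm1 : (1:ℝ) ≤ d / k := (one_le_div hk0).mpr hkd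
  have hm0 : (0:ℝ) < d / k := by linarith
  have h4 : (0:ℝ) < α - 4 := by linarith
  have hρ0 : (0:ℝ) < ρ := by
    rw [hρ]; exact div_pos (by linarith) (mul_pos h4 (by positivity))
  have haρ : (α + 1) * (d / k) ≤ (a - 1) * (ρ + 1) := by
    have h1 : (α + 1) * (d / k) + ρ + 1 ≤ a * (ρ + 1) := by
      have := (div_le_iff₀ (by positivity : (0:ℝ) < ρ + 1)).mp ha
      linarith
    nlinarith
  have hpos : ∀ t : ℕ, (0:ℝ) < a + t := by
    intro t
    have := t.cast_nonneg (α := ℝ)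
    linarith
  -- telescoping sum bound
  have hsum : ∀ t : ℕ, ∑ i ∈ Finset.range (t + 1), (η i) ^ 2 ≤
      ((t:ℝ) + 1) / ((a - 1) * (a + t)) := by
    intro t
    induction t with
    | zero =>
      simp only [zero_add, Finset.sum_range_one, hη, Nat.cast_zero, add_zero, Nat.cast_ofNat]
      rw [div_pow, one_pow, div_le_div_iff₀ (by positivity) (by nlinarith)]
      nlinarith
    | succ n ih =>
      rw [Finset.sum_range_succ]
      have hn0 : (0:ℝ) < a + n := hpos n
      have hn1 : (0:ℝ) < a + n + 1 := by linarith
      have hterm : (η (n+1)) ^ 2 ≤ 1 / ((a + n) * (a + n + 1)) := by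
        rw [hη, div_pow, one_pow]
        apply one_div_le_one_div_of_le (by positivity)
        push_cast
        nlinarith
      have key : ((n:ℝ) + 1) / ((a - 1) * (a + n)) + 1 / ((a + n) * (a + n + 1)) =
          ((n:ℝ) + 1 + 1) / ((a - 1) * (a + n + 1)) := by
        have e1 : a - 1 ≠ 0 := by linarith
        have e2 : a + (n:ℝ) ≠ 0 := by linarith
        have e3 : a + (n:ℝ) + 1 ≠ 0 := by linarith
        field_simp
        ring
      have ecast : a + ((n:ℝ) + 1) = a + (n:ℝ) + 1 := by ring
      push_cast
      rw [ecast]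
      linarith
  -- main induction
  intro t
  induction t with
  | zero =>
    rw [h0]
    have : (0:ℝ) ≤ 4 * α / (α - 4) := by positivity
    have h1 : (0:ℝ) ≤ (η 0) ^ 2 := sq_nonneg _
    have h2 : (0:ℝ) ≤ (d / k) ^ 2 := sq_nonneg _
    positivity
  | succ n ih =>
    have hr := hrec n
    have hn0 : (0:ℝ) < a + n := hpos n
    by_cases hcase : α * (d / k) - 1 ≤ a + n
    · -- geometric branch
      have hb := le_trans hr (min_le_left _ _)
      have step := helper1 α (d / k) (a + n) hα hm1 hcase
      have hcoef : (0:ℝ) ≤ 1 - k / (2 * d) := by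
        have : k / (2 * d) ≤ 1 := by
          rw [div_le_one (by linarith)]
          linarith
        linarith
      have e1 : k / (2 * d) = 1 / (2 * (d / k)) := by
        field_simp
      have e2 : 2 * d / k = 2 * (d / k) := by ring
      calc h (n + 1)
          ≤ (1 - k / (2 * d)) * h n + 2 * d / k * (η n) ^ 2 * A := hb
        _ ≤ (1 - k / (2 * d)) * (4 * α / (α - 4) * (η n) ^ 2 * (d / k) ^ 2 * A)
              + 2 * d / k * (η n) ^ 2 * A := by
            have := mul_le_mul_of_nonneg_left ih hcoef
            linarith
        _ = ((1 - 1 / (2 * (d / k))) * (4 * α / (α - 4) * (1 / (a + n)) ^ 2 * (d / k) ^ 2)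
              + 2 * (d / k) * (1 / (a + n)) ^ 2) * A := by
            rw [hη, e1, e2]; ring
        _ ≤ (4 * α / (α - 4) * (1 / (a + n + 1)) ^ 2 * (d / k) ^ 2) * A :=
            mul_le_mul_of_nonneg_right step hA
        _ = 4 * α / (α - 4) * (η (n + 1)) ^ 2 * (d / k) ^ 2 * A := by
            rw [hη]; push_cast; ring
    · -- crude branch
      push_neg at hcase
      have hb := le_trans hr (min_le_right _ _)
      have hreg : a + ((n:ℝ) + 1) ≤ α * (d / k) := by linarith
      have key := helper2 α ρ a (d / k) ((n:ℝ) + 1) hα hm1 ha1 hρ haρ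
        (by linarith [Nat.cast_nonneg (α := ℝ) n]) hreg
      have hden : (0:ℝ) < (a - 1) * (a + n) := by
        apply mul_pos (by linarith) hn0
      have hsum' := hsum n
      have h5 : h (n + 1) ≤ ((n:ℝ) + 1) ^ 2 / ((a - 1) * (a + n)) * A := by
        calc h (n + 1) ≤ ((n:ℝ) + 1) * ∑ i ∈ Finset.range (n + 1), (η i) ^ 2 * A := hb
          _ = ((n:ℝ) + 1) * ((∑ i ∈ Finset.range (n + 1), (η i) ^ 2) * A) := by
              rw [Finset.sum_mul]
          _ ≤ ((n:ℝ) + 1) * (((n:ℝ) + 1) / ((a - 1) * (a + n)) * A) := by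
              apply mul_le_mul_of_nonneg_left
                (mul_le_mul_of_nonneg_right hsum' hA)
                (by linarith [Nat.cast_nonneg (α := ℝ) n])
          _ = ((n:ℝ) + 1) ^ 2 / ((a - 1) * (a + n)) * A := by ring
      have h6 : ((n:ℝ) + 1) ^ 2 / ((a - 1) * (a + n)) ≤
          4 * α / (α - 4) * (1 / (a + n + 1)) ^ 2 * (d / k) ^ 2 := by
        have hau : (0:ℝ) < a + (n:ℝ) + 1 := by linarith
        have e' : 4 * α / (α - 4) * (1 / (a + (n:ℝ) + 1)) ^ 2 * (d / k) ^ 2 =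
            (4 * α / (α - 4) * (d / k) ^ 2) / (a + (n:ℝ) + 1) ^ 2 := by
          rw [div_pow, one_pow]; ring
        rw [e', div_le_div_iff₀ hden (pow_pos hau 2)]
        nlinarith [key]
      calc h (n + 1) ≤ ((n:ℝ) + 1) ^ 2 / ((a - 1) * (a + n)) * A := h5
        _ ≤ 4 * α / (α - 4) * (1 / (a + n + 1)) ^ 2 * (d / k) ^ 2 * A :=
            mul_le_mul_of_nonneg_right h6 hA
        _ = 4 * α / (α - 4) * (η (n + 1)) ^ 2 * (d / k) ^ 2 * A := by
            rw [hη]; push_cast; ring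
end

section
/- Let $d, n \ge 1$ and $1 \le k \le d$ be integers, let $\Omega_k$ denote the set of all $k$-element subsets of $\{1,\dots,d\}$, and for $\omega \in \Omega_k$ let $\mathrm{rand}_k(v,\omega) \in \mathbb{R}^d$ keep the coordinates of $v$ indexed by $\omega$ and zero out the others. Let $g_1, \dots, g_n \in \mathbb{R}^d$ with $\frac{1}{n}\sum_{i=1}^n \|g_i\|^2 \le G^2$, and let $\bar{g} = \frac{1}{n}\sum_{i=1}^n g_i$. Then $\frac{1}{n\,|\Omega_k|}\sum_{i=1}^n \sum_{\omega \in \Omega_k}\Big\|\frac{d}{k}\,\mathrm{rand}_k(g_i,\omega) - \bar{g}\Big\|^2 \le \frac{d}{k}\,G^2$. -/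
open Finset
open scoped RealInnerProductSpace

lemma filter_mem_powersetCard_card {d k : ℕ} (hk : 1 ≤ k) (j : Fin d) :
    (((Finset.univ : Finset (Fin d)).powersetCard k).filter (fun ω => j ∈ ω)).card
      = (d - 1).choose (k - 1) := by
  have h := Finset.card_powersetCard (k - 1) ((Finset.univ : Finset (Fin d)).erase j)
  rw [card_erase_of_mem (mem_univ j), card_univ, Fintype.card_fin] at h
  rw [← h]
  apply Finset.card_nbij' (fun ω => ω.erase j) (fun s => insert j s)
  · intro ω hω
    simp only [mem_coe, mem_filter, mem_powersetCard] at hω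
    obtain ⟨⟨_, hcard⟩, hj⟩ := hω
    rw [mem_coe, mem_powersetCard]
    exact ⟨erase_subset_erase j (subset_univ ω), by rw [card_erase_of_mem hj, hcard]⟩
  · intro s hs
    rw [mem_coe, mem_powersetCard] at hs
    obtain ⟨hsub, hcard⟩ := hs
    have hjs : j ∉ s := fun hmem => (notMem_erase j _) (hsub hmem)
    simp only [mem_coe, mem_filter, mem_powersetCard]
    refine ⟨⟨subset_univ _, ?_⟩, mem_insert_self _ _⟩
    rw [card_insert_of_notMem hjs, hcard]
    omega
  · intro ω hω
    simp only [mem_coe, mem_filter] at hω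
    exact insert_erase hω.2
  · intro s hs
    rw [mem_coe, mem_powersetCard] at hs
    have hjs : j ∉ s := fun hmem => (notMem_erase j _) (hs.1 hmem)
    exact erase_insert hjs

/-- Variance bound from Section 2.2: for vectors `g_1, …, g_n` with average squared norm at
most `G²` and mean `ḡ`, the unbiased sparsified estimator `(d/k) rand_k(g_i, ω)` (uniform
random index `i` and uniform random `k`-subset `ω`) has variance at most `(d/k) G²`. -/
theorem randk_variance_bound (d n k : ℕ) (hd : 1 ≤ d) (hn : 1 ≤ n) (hk : 1 ≤ k) (hkd : k ≤ d)
    (randk : EuclideanSpace ℝ (Fin d) → Finset (Fin d) → EuclideanSpace ℝ (Fin d))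
    (hrandk : ∀ (v : EuclideanSpace ℝ (Fin d)) (ω : Finset (Fin d)) (i : Fin d),
      randk v ω i = if i ∈ ω then v i else 0)
    (g : Fin n → EuclideanSpace ℝ (Fin d)) (G : ℝ)
    (hG : (1 / (n : ℝ)) * ∑ i : Fin n, ‖g i‖ ^ 2 ≤ G ^ 2)
    (gbar : EuclideanSpace ℝ (Fin d)) (hgbar : gbar = (1 / (n : ℝ)) • ∑ i : Fin n, g i) :
    (1 / ((n : ℝ) * (((Finset.univ : Finset (Fin d)).powersetCard k).card : ℝ))) *
        ∑ i : Fin n, ∑ ω ∈ (Finset.univ : Finset (Fin d)).powersetCard k,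
          ‖((d : ℝ) / k) • randk (g i) ω - gbar‖ ^ 2
      ≤ (d : ℝ) / k * G ^ 2 := by
  classical
  set A := (Finset.univ : Finset (Fin d)).powersetCard k with hA
  have hNcard : A.card = d.choose k := by
    rw [hA, Finset.card_powersetCard, card_univ, Fintype.card_fin]
  set c : ℝ := ((d - 1).choose (k - 1) : ℝ) with hc
  set N : ℝ := (d.choose k : ℝ) with hN
  set a : ℝ := (d : ℝ) / k with ha
  have hkR : (0 : ℝ) < k := by exact_mod_cast hk
  have hnR : (0 : ℝ) < n := by exact_mod_cast hn
  have hNpos : (0 : ℝ) < N := by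
    rw [hN]; exact_mod_cast Nat.choose_pos hkd
  have hapos : (0 : ℝ) < a := by
    rw [ha]; positivity
  have hnat : k * d.choose k = d * (d - 1).choose (k - 1) := by
    have := Nat.add_one_mul_choose_eq (d - 1) (k - 1)
    have hd' : d - 1 + 1 = d := by omega
    have hk' : k - 1 + 1 = k := by omega
    rw [hd', hk'] at this
    exact (Nat.mul_comm k _).trans this.symm
  have haN : a * c = N := by
    rw [ha, hc, hN]
    rw [div_mul_eq_mul_div, div_eq_iff (ne_of_gt hkR), mul_comm ((d.choose k : ℝ))]
    exact_mod_cast hnat.symm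
  have h1 : ∀ v w : EuclideanSpace ℝ (Fin d),
      (∑ ω ∈ A, ⟪randk v ω, w⟫) = c * ⟪v, w⟫ := by
    intro v w
    have hterm : ∀ ω ∈ A, ⟪randk v ω, w⟫ = ∑ j : Fin d, if j ∈ ω then v j * w j else 0 := by
      intro ω _
      rw [PiLp.inner_apply]
      refine Finset.sum_congr rfl fun j _ => ?_
      rw [hrandk]
      by_cases hj : j ∈ ω <;> simp [hj, RCLike.inner_apply, mul_comm]
    rw [Finset.sum_congr rfl hterm, Finset.sum_comm]
    rw [PiLp.inner_apply, Finset.mul_sum]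
    refine Finset.sum_congr rfl fun j _ => ?_
    rw [← Finset.sum_filter, Finset.sum_const, hA, filter_mem_powersetCard_card hk j,
      nsmul_eq_mul]
    simp [hc, RCLike.inner_apply, mul_comm]
  have h2 : ∀ v : EuclideanSpace ℝ (Fin d), (∑ ω ∈ A, ‖randk v ω‖ ^ 2) = c * ‖v‖ ^ 2 := by
    intro v
    have key : ∀ ω, ‖randk v ω‖ ^ 2 = ⟪randk v ω, v⟫ := by
      intro ω
      rw [← real_inner_self_eq_norm_sq, PiLp.inner_apply, PiLp.inner_apply]
      refine Finset.sum_congr rfl fun j _ => ?_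
      rw [hrandk]
      by_cases hj : j ∈ ω <;> simp [hj, RCLike.inner_apply]
    simp_rw [key]
    rw [h1 v v, real_inner_self_eq_norm_sq]
  have hexp : ∀ (i : Fin n) (ω : Finset (Fin d)),
      ‖a • randk (g i) ω - gbar‖ ^ 2
        = a ^ 2 * ‖randk (g i) ω‖ ^ 2 - 2 * a * ⟪randk (g i) ω, gbar⟫ + ‖gbar‖ ^ 2 := by
    intro i ω
    rw [norm_sub_sq_real, norm_smul, real_inner_smul_left, Real.norm_eq_abs,
      abs_of_pos hapos]
    ring
  have hsumg : ∑ i : Fin n, g i = (n : ℝ) • gbar := by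
    rw [hgbar, smul_smul]
    rw [mul_one_div, div_self (ne_of_gt hnR), one_smul]
  have hinner : (∑ i : Fin n, ⟪g i, gbar⟫) = (n : ℝ) * ‖gbar‖ ^ 2 := by
    rw [← sum_inner, hsumg, real_inner_smul_left, real_inner_self_eq_norm_sq]
  have htotal : ∑ i : Fin n, ∑ ω ∈ A, ‖a • randk (g i) ω - gbar‖ ^ 2
      = a * N * (∑ i : Fin n, ‖g i‖ ^ 2) - (n : ℝ) * N * ‖gbar‖ ^ 2 := by
    have hper : ∀ i : Fin n, ∑ ω ∈ A, ‖a • randk (g i) ω - gbar‖ ^ 2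
        = a ^ 2 * (c * ‖g i‖ ^ 2) - 2 * a * (c * ⟪g i, gbar⟫) + N * ‖gbar‖ ^ 2 := by
      intro i
      simp_rw [hexp i]
      rw [Finset.sum_add_distrib, Finset.sum_sub_distrib, ← Finset.mul_sum, h2,
        ← Finset.mul_sum, h1, Finset.sum_const, hNcard, nsmul_eq_mul, ← hN]
    rw [Finset.sum_congr rfl fun i _ => hper i, Finset.sum_add_distrib, Finset.sum_sub_distrib]
    simp only [← Finset.mul_sum]
    rw [hinner, Finset.sum_const, card_univ, Fintype.card_fin, nsmul_eq_mul]
    linear_combination (a * (∑ i : Fin n, ‖g i‖ ^ 2) - 2 * (n : ℝ) * ‖gbar‖ ^ 2) * haN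
  rw [htotal, hNcard]
  have hcast : ((d.choose k : ℕ) : ℝ) = N := hN.symm
  rw [hcast]
  have hkey : 1 / ((n : ℝ) * N) * (a * N * (∑ i : Fin n, ‖g i‖ ^ 2) - (n : ℝ) * N * ‖gbar‖ ^ 2)
      = a * (1 / (n : ℝ) * ∑ i : Fin n, ‖g i‖ ^ 2) - ‖gbar‖ ^ 2 := by
    field_simp
  rw [hkey]
  have hmul : a * (1 / (n : ℝ) * ∑ i : Fin n, ‖g i‖ ^ 2) ≤ a * G ^ 2 :=
    mul_le_mul_of_nonneg_left hG hapos.le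
  nlinarith [sq_nonneg ‖gbar‖]
end
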